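/- Let y = Φx + v with x K-sparse with support T. If min_{j∈T}|x_j| > (2(1−δ_K)/(1 − 3δ_{2K})) ‖v‖₂ and δ_{2K} < 1/3, then for every K-element subset Λ ≠ T of {1,…,N}, ‖r_T‖₂ < ‖r_Λ‖₂, where r_I = (I − Φ_I(Φ_I'Φ_I)^{-1}Φ_I') y. Hence the candidate of cardinality K with minimum residual norm is exactly the support T. -/

import Mathlib

open Matrix Finset

noncomputable def l2 {n : Type*} [Fintype n] (x : n → ℝ) : ℝ :=
  Real.sqrt (∑ i, (x i) ^ 2)

def Sparse {N : ℕ} (K : ℕ) (x : Fin N → ℝ) : Prop :=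
  (Finset.univ.filter (fun i => x i ≠ 0)).card ≤ K

def RIP {M N : ℕ} (Φ : Matrix (Fin M) (Fin N) ℝ) (K : ℕ) (δ : ℝ) : Prop :=
  ∀ x : Fin N → ℝ, Sparse K x →
    (1 - δ) * (l2 x) ^ 2 ≤ (l2 (Φ.mulVec x)) ^ 2 ∧
    (l2 (Φ.mulVec x)) ^ 2 ≤ (1 + δ) * (l2 x) ^ 2

def colSub {M N : ℕ} (Φ : Matrix (Fin M) (Fin N) ℝ) (S : Finset (Fin N)) :
    Matrix (Fin M) {i // i ∈ S} ℝ := fun r c => Φ r c.1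

noncomputable def resid {M N : ℕ} (Φ : Matrix (Fin M) (Fin N) ℝ) (S : Finset (Fin N))
    (y : Fin M → ℝ) : Fin M → ℝ :=
  y - (colSub Φ S).mulVec
    ((((colSub Φ S)ᵀ * colSub Φ S)⁻¹).mulVec ((colSub Φ S)ᵀ.mulVec y))

def restr {N : ℕ} (x : Fin N → ℝ) (S : Finset (Fin N)) : {i // i ∈ S} → ℝ :=
  fun i => x i.1

/- ## auxiliary lemmas -/

lemma l2_nonneg {n : Type*} [Fintype n] (x : n → ℝ) : 0 ≤ l2 x := Real.sqrt_nonneg _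

lemma l2_sq {n : Type*} [Fintype n] (x : n → ℝ) : (l2 x) ^ 2 = ∑ i, (x i) ^ 2 :=
  Real.sq_sqrt (Finset.sum_nonneg fun _ _ => sq_nonneg _)

lemma l2_pos {n : Type*} [Fintype n] {x : n → ℝ} (hx : x ≠ 0) : 0 < l2 x := by
  rcases (l2_nonneg x).lt_or_eq with h | h
  · exact h
  · exfalso; apply hx
    have h2 : ∑ i, (x i) ^ 2 = 0 := by
      have := l2_sq x; rw [← h] at this; simpa using this.symm
    funext i
    have := (Finset.sum_eq_zero_iff_of_nonneg (fun i _ => sq_nonneg (x i))).1 h2 i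
      (Finset.mem_univ i)
    exact pow_eq_zero_iff (n := 2) (by norm_num) |>.1 this

lemma l2_eq_norm {n : Type*} [Fintype n] (x : n → ℝ) :
    l2 x = ‖(WithLp.equiv 2 (n → ℝ)).symm x‖ := by
  rw [EuclideanSpace.norm_eq]
  simp [l2, sq_abs, WithLp.equiv]

lemma l2_add_le {n : Type*} [Fintype n] (a b : n → ℝ) : l2 (a + b) ≤ l2 a + l2 b := by
  simp only [l2_eq_norm]
  exact norm_add_le ((WithLp.equiv 2 (n → ℝ)).symm a) ((WithLp.equiv 2 (n → ℝ)).symm b)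

lemma l2_rev_triangle {n : Type*} [Fintype n] (a b : n → ℝ) : l2 a - l2 b ≤ l2 (a + b) := by
  have h := l2_add_le (a + b) (-b)
  have h1 : a + b + -b = a := by ring
  rw [h1] at h
  have h2 : l2 (-b) = l2 b := by simp [l2]
  linarith [h, h2.le]

lemma l2_le_of_orth {n : Type*} [Fintype n] (a b : n → ℝ) (h : ∑ i, a i * b i = 0) :
    l2 a ≤ l2 (a + b) := by
  unfold l2
  apply Real.sqrt_le_sqrt
  have expand : ∑ i, ((a + b) i) ^ 2
      = ∑ i, (a i) ^ 2 + 2 * ∑ i, a i * b i + ∑ i, (b i) ^ 2 := by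
    rw [Finset.mul_sum, ← Finset.sum_add_distrib, ← Finset.sum_add_distrib]
    exact Finset.sum_congr rfl fun i _ => by simp [Pi.add_apply]; ring
  rw [expand, h]
  have := Finset.sum_nonneg (fun i (_ : i ∈ (Finset.univ : Finset n)) => sq_nonneg (b i))
  linarith

def extend0 {N : ℕ} (S : Finset (Fin N)) (w : {i // i ∈ S} → ℝ) : Fin N → ℝ :=
  fun i => if h : i ∈ S then w ⟨i, h⟩ else 0

lemma sum_eq_sum_subtype {N : ℕ} (S : Finset (Fin N)) (f : Fin N → ℝ)
    (hf : ∀ i ∉ S, f i = 0) : ∑ i, f i = ∑ c : {i // i ∈ S}, f c.1 := by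
  calc ∑ i, f i = ∑ i ∈ S, f i :=
        (Finset.sum_subset (Finset.subset_univ S) (fun i _ hi => hf i hi)).symm
    _ = ∑ c : {i // i ∈ S}, f c.1 := (Finset.sum_coe_sort S f).symm

lemma colSub_mulVec {M N : ℕ} (Φ : Matrix (Fin M) (Fin N) ℝ) (S : Finset (Fin N))
    (w : {i // i ∈ S} → ℝ) : (colSub Φ S).mulVec w = Φ.mulVec (extend0 S w) := by
  funext m
  simp only [Matrix.mulVec, dotProduct, colSub]
  rw [sum_eq_sum_subtype S (fun i => Φ m i * extend0 S w i)
      (fun i hi => by simp [extend0, hi])]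
  exact (Finset.sum_congr rfl fun c _ => by simp [extend0, c.2]).symm

lemma l2_extend0 {N : ℕ} (S : Finset (Fin N)) (w : {i // i ∈ S} → ℝ) :
    (l2 (extend0 S w)) ^ 2 = (l2 w) ^ 2 := by
  rw [l2_sq, l2_sq]
  rw [sum_eq_sum_subtype S (fun i => (extend0 S w i) ^ 2) (fun i hi => by simp [extend0, hi])]
  exact Finset.sum_congr rfl fun c _ => by simp [extend0, c.2]

lemma sparse_extend0 {N : ℕ} (S : Finset (Fin N)) (w : {i // i ∈ S} → ℝ) :
    Sparse S.card (extend0 S w) := by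
  apply Finset.card_le_card
  intro i hi
  rcases Finset.mem_filter.1 hi with ⟨_, hne⟩
  by_contra h
  exact hne (by simp [extend0, h])

lemma final_arith (δK δ2K nv m rT rΛ f : ℝ) (hδK0 : 0 ≤ δK) (hle : δK ≤ δ2K)
    (hδ2K : δ2K < 1 / 3) (hnv : 0 ≤ nv) (hm : 0 < m) (hrT : rT ≤ nv)
    (hmin : 2 * (1 - δK) / (1 - 3 * δ2K) * nv < m)
    (hf : Real.sqrt (1 - δ2K) * m ≤ f) (hrΛ : f - nv ≤ rΛ) : rT < rΛ := by
  have hδ2K0 : 0 ≤ δ2K := le_trans hδK0 hle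
  have h1δ : (0:ℝ) < 1 - δ2K := by linarith
  set s := Real.sqrt (1 - δ2K) with hs
  have hs0 : 0 < s := Real.sqrt_pos.2 h1δ
  have hs2 : s ^ 2 = 1 - δ2K := Real.sq_sqrt h1δ.le
  have hden : (0:ℝ) < 1 - 3 * δ2K := by linarith
  have hkey : 1 - 3 * δ2K ≤ s * (1 - δK) := by
    nlinarith [hs2, hs0.le, sq_nonneg (s - 1), sq_nonneg (s * (1 - δ2K) - (1 - 3 * δ2K)),
      mul_nonneg hs0.le hs0.le]
  have h2nv : 2 * nv < s * m := by
    rcases eq_or_lt_of_le hnv with h0 | h0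
    · rw [← h0]; nlinarith [mul_pos hs0 hm]
    · have hc : 2 ≤ s * (2 * (1 - δK) / (1 - 3 * δ2K)) := by
        rw [← mul_div_assoc, le_div_iff₀ hden]
        nlinarith [hkey]
      nlinarith [mul_lt_mul_of_pos_left hmin hs0, mul_le_mul_of_nonneg_right hc h0.le]
  linarith

set_option maxHeartbeats 1000000 in
theorem support_minimizes_residual {M N K : ℕ} (Φ : Matrix (Fin M) (Fin N) ℝ)
    (x : Fin N → ℝ) (T : Finset (Fin N)) (v y : Fin M → ℝ)
    (hy : y = Φ.mulVec x + v) (hT : T.card = K)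
    (hsupp : ∀ i, x i ≠ 0 ↔ i ∈ T)
    (δK δ2K : ℝ) (hδK0 : 0 ≤ δK) (hle : δK ≤ δ2K) (hδ2K : δ2K < 1 / 3)
    (hRIPK : RIP Φ K δK) (hRIP2K : RIP Φ (2 * K) δ2K)
    (hmin : ∀ j ∈ T, (2 * (1 - δK) / (1 - 3 * δ2K)) * l2 v < |x j|) :
    ∀ Λ : Finset (Fin N), Λ.card = K → Λ ≠ T →
      l2 (resid Φ T y) < l2 (resid Φ Λ y) := by
  intro Λ hΛcard hΛne
  have hδK1 : δK < 1 := lt_of_le_of_lt hle (by linarith)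
  have hδ2K0 : 0 ≤ δ2K := le_trans hδK0 hle
  set A := colSub Φ T with hA
  set G := Aᵀ * A with hG
  -- G is positive definite
  have hGpos : G.PosDef := by
    rw [Matrix.posDef_iff_dotProduct_mulVec]
    constructor
    · unfold Matrix.IsHermitian
      rw [hG, Matrix.conjTranspose_eq_transpose_of_trivial, Matrix.transpose_mul,
        Matrix.transpose_transpose]
    · intro w hw
      have hkey : w ⬝ᵥ G.mulVec w = ∑ m, (A.mulVec w m) ^ 2 := by
        rw [hG, ← Matrix.mulVec_mulVec, Matrix.dotProduct_mulVec,
          Matrix.vecMul_transpose]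
        simp [dotProduct, sq]
      have hAw : A.mulVec w = Φ.mulVec (extend0 T w) := colSub_mulVec Φ T w
      have hsp : Sparse K (extend0 T w) := hT ▸ sparse_extend0 T w
      have hrip := (hRIPK (extend0 T w) hsp).1
      rw [l2_extend0] at hrip
      have hlw : 0 < l2 w := l2_pos hw
      have : 0 < ∑ m, (A.mulVec w m) ^ 2 := by
        rw [← l2_sq, hAw]
        calc (0:ℝ) < (1 - δK) * (l2 w) ^ 2 :=
              mul_pos (by linarith) (by positivity)
          _ ≤ _ := hrip
      simpa [hkey] using this
  have hGdet : IsUnit G.det := isUnit_iff_ne_zero.2 (ne_of_gt hGpos.det_pos)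
  -- orthogonality of residual at T
  have horth : Aᵀ.mulVec (resid Φ T y) = 0 := by
    unfold resid
    rw [← hA, Matrix.mulVec_sub, Matrix.mulVec_mulVec, Matrix.mulVec_mulVec, ← hG,
      Matrix.mul_nonsing_inv G hGdet, Matrix.one_mulVec, sub_self]
  -- x = extend0 T (restr x T)
  have hxT : extend0 T (restr x T) = x := by
    funext i
    by_cases h : i ∈ T
    · simp [extend0, restr, h]
    · simp [extend0, restr, h]
      exact (not_ne_iff.1 (mt (hsupp i).1 h)).symm
  -- l2 (resid T) ≤ l2 v
  have hrT : l2 (resid Φ T y) ≤ l2 v := by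
    set d : {i // i ∈ T} → ℝ :=
      G⁻¹.mulVec (Aᵀ.mulVec y) - restr x T with hd
    have hv : v = resid Φ T y + A.mulVec d := by
      unfold resid
      rw [← hA, hd, Matrix.mulVec_sub]
      have hPhix : Φ.mulVec x = A.mulVec (restr x T) := by
        rw [colSub_mulVec, hxT]
      rw [hy, hPhix]; abel
    rw [hv]
    apply l2_le_of_orth
    have : ∑ i, resid Φ T y i * A.mulVec d i = (resid Φ T y) ⬝ᵥ (A.mulVec d) := rfl
    rw [this, Matrix.dotProduct_mulVec, ← Matrix.transpose_transpose A,
      Matrix.vecMul_transpose, horth, zero_dotProduct]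
  -- Λ side
  set AΛ := colSub Φ Λ with hAΛ
  set wΛ : {i // i ∈ Λ} → ℝ := ((AΛᵀ * AΛ)⁻¹).mulVec (AΛᵀ.mulVec y) with hwΛ
  set u : Fin N → ℝ := x - extend0 Λ wΛ with hu
  have hres : resid Φ Λ y = Φ.mulVec u + v := by
    unfold resid
    rw [← hAΛ, ← hwΛ, colSub_mulVec Φ Λ, hu, Matrix.mulVec_sub, hy]
    abel
  have hsp : Sparse (2 * K) u := by
    unfold Sparse
    calc (Finset.univ.filter (fun i => u i ≠ 0)).card ≤ (T ∪ Λ).card := by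
          apply Finset.card_le_card
          intro i hi
          rcases Finset.mem_filter.1 hi with ⟨_, hne⟩
          by_contra h
          rw [Finset.mem_union, not_or] at h
          apply hne
          have hx0 : x i = 0 := not_ne_iff.1 (mt (hsupp i).1 h.1)
          show u i = 0
          rw [hu]
          simp [hx0, extend0, h.2]
      _ ≤ T.card + Λ.card := Finset.card_union_le _ _
      _ = 2 * K := by rw [hT, hΛcard]; ring
  have hrip := (hRIP2K u hsp).1
  have hTnsub : ¬ T ⊆ Λ := fun hsub =>
    hΛne (Finset.eq_of_subset_of_card_le hsub (by rw [hT, hΛcard])).symm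
  obtain ⟨j, hjT, hjΛ⟩ := Finset.not_subset.1 hTnsub
  have hxj : x j ≠ 0 := (hsupp j).2 hjT
  have huj : u j = x j := by rw [hu]; simp [extend0, hjΛ]
  have husq : (x j) ^ 2 ≤ (l2 u) ^ 2 := by
    rw [l2_sq]
    calc (x j) ^ 2 = (u j) ^ 2 := by rw [huj]
      _ ≤ ∑ i, (u i) ^ 2 :=
          Finset.single_le_sum (fun i _ => sq_nonneg (u i)) (Finset.mem_univ j)
  have h1δ : (0:ℝ) < 1 - δ2K := by linarith
  have hΦu : Real.sqrt (1 - δ2K) * |x j| ≤ l2 (Φ.mulVec u) := by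
    have hsq : (Real.sqrt (1 - δ2K) * |x j|) ^ 2 ≤ (l2 (Φ.mulVec u)) ^ 2 := by
      rw [mul_pow, Real.sq_sqrt h1δ.le, sq_abs]
      calc (1 - δ2K) * (x j) ^ 2 ≤ (1 - δ2K) * (l2 u) ^ 2 := by nlinarith [husq]
        _ ≤ _ := hrip
    calc Real.sqrt (1 - δ2K) * |x j|
        = Real.sqrt ((Real.sqrt (1 - δ2K) * |x j|) ^ 2) :=
          (Real.sqrt_sq (by positivity)).symm
      _ ≤ Real.sqrt ((l2 (Φ.mulVec u)) ^ 2) := Real.sqrt_le_sqrt hsq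
      _ = l2 (Φ.mulVec u) := Real.sqrt_sq (l2_nonneg _)
  have hrΛ : l2 (Φ.mulVec u) - l2 v ≤ l2 (resid Φ Λ y) := by
    rw [hres]; exact l2_rev_triangle _ _
  have hnv : 0 ≤ l2 v := l2_nonneg v
  have hmj := hmin j hjT
  exact final_arith δK δ2K (l2 v) |x j| (l2 (resid Φ T y)) (l2 (resid Φ Λ y))
    (l2 (Φ.mulVec u)) hδK0 hle hδ2K hnv (abs_pos.2 hxj) hrT hmj hΦu hrΛ
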